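/- (Existence of a dominating Pareto point, used in the proof of Lemma 2.) Let n : ℕ and let S ⊆ ℝⁿ be a closed set contained in the nonnegative orthant {x : ℝⁿ | 0 ≤ x}. Then for every x ∈ S there exists p ∈ S with p ≤ x such that p is Pareto-minimal in S. -/
import Mathlib

/-- The Pareto frontier of a set `S` in `Fin n → ℝ` (componentwise order):
the set of Pareto-minimal points, i.e. points of `S` not strictly dominated by
any other point of `S`. -/
def paretoFrontier {n : ℕ} (S : Set (Fin n → ℝ)) : Set (Fin n → ℝ) :=
  {p | p ∈ S ∧ ¬ ∃ q ∈ S, q ≤ p ∧ q ≠ p}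

/-- Every point of a closed subset of the nonnegative orthant is dominated by a
Pareto-minimal point of the set. -/
theorem exists_pareto_le (n : ℕ) (S : Set (Fin n → ℝ))
    (hc : IsClosed S) (hn : S ⊆ {x : Fin n → ℝ | 0 ≤ x}) :
    ∀ x ∈ S, ∃ p ∈ S, p ≤ x ∧ p ∈ paretoFrontier S := by
  intro x hx
  set T : Set (Fin n → ℝ) := S ∩ Set.Icc 0 x with hT
  have hTc : IsCompact T := by
    have : IsCompact (Set.Icc (0 : Fin n → ℝ) x) := isCompact_Icc
    exact this.of_isClosed_subset (hc.inter isClosed_Icc) Set.inter_subset_right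
  have hTne : T.Nonempty := ⟨x, hx, hn hx, le_refl x⟩
  have hcont : Continuous fun p : Fin n → ℝ => ∑ i, p i := by
    continuity
  obtain ⟨p, hpT, hmin⟩ := hTc.exists_isMinOn hTne hcont.continuousOn
  obtain ⟨hpS, hp0, hpx⟩ := hpT
  refine ⟨p, hpS, hpx, hpS, ?_⟩
  rintro ⟨q, hqS, hqp, hqne⟩
  have hqT : q ∈ T := ⟨hqS, hn hqS, le_trans hqp hpx⟩
  have hlt : ∑ i, q i < ∑ i, p i := by
    obtain ⟨i, hi⟩ : ∃ i, q i < p i := by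
      by_contra h
      push_neg at h
      exact hqne (le_antisymm hqp fun i => h i)
    exact Finset.sum_lt_sum (fun i _ => hqp i) ⟨i, Finset.mem_univ i, hi⟩
  exact absurd (hmin hqT) (not_le.mpr hlt)
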